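/- Let $(W_{ij})_{(i,j)\in\mathbb{N}^2}$ be a separately exchangeable, dissociated array of random vectors, let $f$ be a bounded measurable function with $E[f(W_{11})] = \mu$, and let $(Z_{ij})$ be i.i.d. Bernoulli$(p_{NM})$ with $p_{NM} NM \to \infty$, independent of the data. Then $\hat L^{-1} \sum_{i=1}^N \sum_{j=1}^M Z_{ij} f(W_{ij}) \to \mu$ in probability as $\min\{N,M\} \to \infty$, where $\hat L = \sum_{i,j} Z_{ij}$. -/

import Mathlib

open MeasureTheory ProbabilityTheory Filter
open scoped ENNReal Topology

/-- Separate exchangeability of a two-way array: for all permutations `π₁, π₂` of `ℕ`,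
`(W_{π₁(i) π₂(j)})` has the same (joint) distribution as `(W_{ij})`. -/
def SepExch {Ω E : Type*} [MeasurableSpace Ω] [MeasurableSpace E]
    (μ : Measure Ω) (W : ℕ → ℕ → Ω → E) : Prop :=
  ∀ π₁ π₂ : Equiv.Perm ℕ,
    Measure.map (fun ω (ij : ℕ × ℕ) => W (π₁ ij.1) (π₂ ij.2) ω) μ =
      Measure.map (fun ω (ij : ℕ × ℕ) => W ij.1 ij.2 ω) μ

/-- Dissociation of a two-way array: for all `(c₁, c₂)`, the subarray with indices
`i < c₁, j < c₂` is independent of the subarray with indices `i ≥ c₁, j ≥ c₂`. -/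
def Dissociated {Ω E : Type*} [MeasurableSpace Ω] [MeasurableSpace E]
    (μ : Measure Ω) (W : ℕ → ℕ → Ω → E) : Prop :=
  ∀ c₁ c₂ : ℕ,
    IndepFun
      (fun ω (ij : {q : ℕ × ℕ // q.1 < c₁ ∧ q.2 < c₂}) => W ij.1.1 ij.1.2 ω)
      (fun ω (ij : {q : ℕ × ℕ // c₁ ≤ q.1 ∧ c₂ ≤ q.2}) => W ij.1.1 ij.1.2 ω) μ


lemma integrable_bdd {Ω : Type*} [MeasurableSpace Ω] (μ : Measure Ω) [IsFiniteMeasure μ]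
    (X : Ω → ℝ) (hX : Measurable X) (C : ℝ) (h : ∀ ω, |X ω| ≤ C) : Integrable X μ := by
  refine Integrable.mono' (integrable_const C) hX.aestronglyMeasurable ?_
  filter_upwards with ω using by simpa [Real.norm_eq_abs] using h ω

lemma cheb {Ω : Type*} [MeasurableSpace Ω] (μ : Measure Ω) [IsProbabilityMeasure μ]
    (X : Ω → ℝ) (hX : Measurable X) (c V ε : ℝ) (hε : 0 < ε)
    (hint : Integrable (fun ω => (X ω - c)^2) μ)
    (hV : ∫ ω, (X ω - c)^2 ∂μ ≤ V) :
    μ {ω | ε ≤ |X ω - c|} ≤ ENNReal.ofReal (V / ε^2) := by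
  have hmono : μ {ω | ε ≤ |X ω - c|} ≤ μ {ω | ENNReal.ofReal (ε^2) ≤ ENNReal.ofReal ((X ω - c)^2)} := by
    refine measure_mono fun ω hω => ?_
    have h1 : ε^2 ≤ (X ω - c)^2 := by
      have := sq_abs (X ω - c)
      have hab : ε ≤ |X ω - c| := hω
      nlinarith [abs_nonneg (X ω - c), hε.le]
    exact ENNReal.ofReal_le_ofReal h1
  have hmark := mul_meas_ge_le_lintegral₀ (μ := μ)
    (f := fun ω => ENNReal.ofReal ((X ω - c)^2))
    (by exact (ENNReal.measurable_ofReal.comp ((hX.sub measurable_const).pow_const 2)).aemeasurable)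
    (ENNReal.ofReal (ε^2))
  have hlint : ∫⁻ ω, ENNReal.ofReal ((X ω - c)^2) ∂μ = ENNReal.ofReal (∫ ω, (X ω - c)^2 ∂μ) := by
    rw [MeasureTheory.ofReal_integral_eq_lintegral_ofReal hint]
    filter_upwards with ω using sq_nonneg _
  have hεpos : (0:ℝ≥0∞) < ENNReal.ofReal (ε^2) := by
    simpa using ENNReal.ofReal_pos.2 (pow_pos hε 2)
  calc μ {ω | ε ≤ |X ω - c|} ≤ μ {ω | ENNReal.ofReal (ε^2) ≤ ENNReal.ofReal ((X ω - c)^2)} := hmono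
    _ ≤ ENNReal.ofReal (∫ ω, (X ω - c)^2 ∂μ) / ENNReal.ofReal (ε^2) := by
        rw [ENNReal.le_div_iff_mul_le (Or.inl hεpos.ne') (Or.inl ENNReal.ofReal_ne_top)]
        rw [mul_comm]
        exact le_trans hmark (le_of_eq hlint)
    _ ≤ ENNReal.ofReal V / ENNReal.ofReal (ε^2) := by
        exact ENNReal.div_le_div_right (ENNReal.ofReal_le_ofReal hV) _
    _ = ENNReal.ofReal (V / ε^2) := by
        rw [ENNReal.ofReal_div_of_pos (pow_pos hε 2)]


lemma perm01 (i k : ℕ) (h : i ≠ k) : ∃ π : Equiv.Perm ℕ, π 0 = i ∧ π 1 = k := by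
  set σ : Equiv.Perm ℕ := Equiv.swap 0 i
  refine ⟨σ * Equiv.swap 1 (σ.symm k), ?_, ?_⟩
  · have h0 : σ.symm k ≠ 0 := by
      intro hc
      apply h
      have : k = σ 0 := by rw [← hc]; simp
      simpa [σ] using this.symm
    simp only [Equiv.Perm.mul_apply]
    rw [Equiv.swap_apply_of_ne_of_ne (by norm_num) (Ne.symm h0)]
    simp [σ]
  · simp [Equiv.Perm.mul_apply]

section
variable {Ω E : Type*} [MeasurableSpace Ω] [MeasurableSpace E]
    (μ : Measure Ω) [IsProbabilityMeasure μ]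
    (W : ℕ → ℕ → Ω → E) (hWmeas : ∀ i j, Measurable (W i j))
    (f : E → ℝ) (hf : Measurable f)

include hWmeas hf

lemma law_pair (hexch : SepExch μ W) {i j k l : ℕ} (hik : i ≠ k) (hjl : j ≠ l) :
    Measure.map (fun ω => (W i j ω, W k l ω)) μ =
      Measure.map (fun ω => (W 0 0 ω, W 1 1 ω)) μ := by
  obtain ⟨π₁, h10, h11⟩ := perm01 i k hik
  obtain ⟨π₂, h20, h21⟩ := perm01 j l hjl
  have hfull : Measurable (fun ω (ij : ℕ × ℕ) => W ij.1 ij.2 ω) :=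
    measurable_pi_lambda _ fun ij => hWmeas ij.1 ij.2
  have hperm : Measurable (fun ω (ij : ℕ × ℕ) => W (π₁ ij.1) (π₂ ij.2) ω) :=
    measurable_pi_lambda _ fun ij => hWmeas _ _
  have hg : Measurable (fun h : ℕ × ℕ → E => (h (0,0), h (1,1))) :=
    (measurable_pi_apply _).prodMk (measurable_pi_apply _)
  have hfun : ((fun h : ℕ × ℕ → E => (h (0,0), h (1,1))) ∘
      (fun ω (ij : ℕ × ℕ) => W (π₁ ij.1) (π₂ ij.2) ω)) = fun ω => (W i j ω, W k l ω) := by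
    funext ω
    simp [Function.comp, h10, h11, h20, h21]
  calc Measure.map (fun ω => (W i j ω, W k l ω)) μ
      = Measure.map ((fun h : ℕ × ℕ → E => (h (0,0), h (1,1))) ∘
          (fun ω (ij : ℕ × ℕ) => W (π₁ ij.1) (π₂ ij.2) ω)) μ := by rw [hfun]
    _ = Measure.map (fun h : ℕ × ℕ → E => (h (0,0), h (1,1)))
          (Measure.map (fun ω (ij : ℕ × ℕ) => W (π₁ ij.1) (π₂ ij.2) ω) μ) :=
        (Measure.map_map hg hperm).symm
    _ = Measure.map (fun h : ℕ × ℕ → E => (h (0,0), h (1,1)))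
          (Measure.map (fun ω (ij : ℕ × ℕ) => W ij.1 ij.2 ω) μ) := by rw [hexch π₁ π₂]
    _ = Measure.map (fun ω => (W 0 0 ω, W 1 1 ω)) μ := by
        rw [Measure.map_map hg hfull]; rfl

lemma law_single (hexch : SepExch μ W) (i j : ℕ) :
    Measure.map (W i j) μ = Measure.map (W 0 0) μ := by
  have hfull : Measurable (fun ω (ij : ℕ × ℕ) => W ij.1 ij.2 ω) :=
    measurable_pi_lambda _ fun ij => hWmeas ij.1 ij.2
  have hperm : Measurable (fun ω (ij : ℕ × ℕ) => W ((Equiv.swap 0 i) ij.1) ((Equiv.swap 0 j) ij.2) ω) :=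
    measurable_pi_lambda _ fun ij => hWmeas _ _
  have hg : Measurable (fun h : ℕ × ℕ → E => h (0,0)) := measurable_pi_apply _
  have hfun : ((fun h : ℕ × ℕ → E => h (0,0)) ∘
      (fun ω (ij : ℕ × ℕ) => W ((Equiv.swap 0 i) ij.1) ((Equiv.swap 0 j) ij.2) ω)) = W i j := by
    funext ω
    simp [Function.comp]
  calc Measure.map (W i j) μ
      = Measure.map ((fun h : ℕ × ℕ → E => h (0,0)) ∘
          (fun ω (ij : ℕ × ℕ) => W ((Equiv.swap 0 i) ij.1) ((Equiv.swap 0 j) ij.2) ω)) μ := by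
        rw [hfun]
    _ = Measure.map (fun h : ℕ × ℕ → E => h (0,0))
          (Measure.map (fun ω (ij : ℕ × ℕ) => W ((Equiv.swap 0 i) ij.1) ((Equiv.swap 0 j) ij.2) ω) μ) :=
        (Measure.map_map hg hperm).symm
    _ = Measure.map (fun h : ℕ × ℕ → E => h (0,0))
          (Measure.map (fun ω (ij : ℕ × ℕ) => W ij.1 ij.2 ω) μ) := by
        rw [hexch (Equiv.swap 0 i) (Equiv.swap 0 j)]
    _ = Measure.map (W 0 0) μ := by rw [Measure.map_map hg hfull]; rfl

lemma indep_00_11 (hdiss : Dissociated μ W) :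
    IndepFun (W 0 0) (W 1 1) μ := by
  have h := hdiss 1 1
  have hg₁ : Measurable (fun h : {q : ℕ × ℕ // q.1 < 1 ∧ q.2 < 1} → E =>
      h ⟨(0,0), ⟨one_pos, one_pos⟩⟩) := measurable_pi_apply _
  have hg₂ : Measurable (fun h : {q : ℕ × ℕ // 1 ≤ q.1 ∧ 1 ≤ q.2} → E =>
      h ⟨(1,1), ⟨le_refl 1, le_refl 1⟩⟩) := measurable_pi_apply _
  exact h.comp hg₁ hg₂

lemma single_mean (hexch : SepExch μ W) (i j : ℕ) :
    ∫ ω, f (W i j ω) ∂μ = ∫ ω, f (W 0 0 ω) ∂μ := by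
  rw [← integral_map (hWmeas i j).aemeasurable hf.aestronglyMeasurable,
    law_single μ W hWmeas f hf hexch i j,
    integral_map (hWmeas 0 0).aemeasurable hf.aestronglyMeasurable]

lemma cross_mean (hexch : SepExch μ W) (hdiss : Dissociated μ W)
    {i j k l : ℕ} (hik : i ≠ k) (hjl : j ≠ l)
    (Cb : ℝ) (hCb : ∀ x, |f x| ≤ Cb) :
    ∫ ω, f (W i j ω) * f (W k l ω) ∂μ =
      (∫ ω, f (W 0 0 ω) ∂μ) * (∫ ω, f (W 0 0 ω) ∂μ) := by
  have hfm : AEStronglyMeasurable (fun z : E × E => f z.1 * f z.2)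
      (Measure.map (fun ω => (W i j ω, W k l ω)) μ) :=
    ((hf.comp measurable_fst).mul (hf.comp measurable_snd)).aestronglyMeasurable
  have hpm : AEMeasurable (fun ω => (W i j ω, W k l ω)) μ :=
    ((hWmeas i j).prodMk (hWmeas k l)).aemeasurable
  have hpm' : AEMeasurable (fun ω => (W 0 0 ω, W 1 1 ω)) μ :=
    ((hWmeas 0 0).prodMk (hWmeas 1 1)).aemeasurable
  have step : ∫ ω, f (W i j ω) * f (W k l ω) ∂μ = ∫ ω, f (W 0 0 ω) * f (W 1 1 ω) ∂μ := by
    rw [← integral_map hpm hfm, law_pair μ W hWmeas f hf hexch hik hjl,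
      integral_map hpm' (by
        ((exact ((hf.comp measurable_fst).mul (hf.comp measurable_snd)).aestronglyMeasurable)))]
  rw [step]
  have hindep : IndepFun (fun ω => f (W 0 0 ω)) (fun ω => f (W 1 1 ω)) μ :=
    (indep_00_11 μ W hWmeas f hf hdiss).comp hf hf
  have hint1 : Integrable (fun ω => f (W 0 0 ω)) μ := by
    refine Integrable.mono' (integrable_const Cb) (hf.comp (hWmeas 0 0)).aestronglyMeasurable ?_
    filter_upwards with ω using by simpa [Real.norm_eq_abs] using hCb _
  have hint2 : Integrable (fun ω => f (W 1 1 ω)) μ := by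
    refine Integrable.mono' (integrable_const Cb) (hf.comp (hWmeas 1 1)).aestronglyMeasurable ?_
    filter_upwards with ω using by simpa [Real.norm_eq_abs] using hCb _
  have heq := hindep.integral_mul_eq_mul_integral hint1.aestronglyMeasurable hint2.aestronglyMeasurable
  rw [show ((fun ω => f (W 0 0 ω)) * fun ω => f (W 1 1 ω)) = fun ω => f (W 0 0 ω) * f (W 1 1 ω) from rfl] at heq
  rw [heq, single_mean μ W hWmeas f hf hexch 1 1]
end

lemma sum_sq_expansion {Ω : Type*} [MeasurableSpace Ω] (μ : Measure Ω) [IsProbabilityMeasure μ]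
    {ι : Type*} (I : Finset ι) (Y : ι → Ω → ℝ) (c : ℝ) (C : ℝ)
    (hmeas : ∀ q, Measurable (Y q)) (hbdd : ∀ q ω, |Y q ω| ≤ C)
    (hmean : ∀ q ∈ I, ∫ ω, Y q ω ∂μ = c)
    (B : ι → ι → ℝ)
    (hB : ∀ q ∈ I, ∀ r ∈ I, |(∫ ω, Y q ω * Y r ω ∂μ) - c^2| ≤ B q r) :
    ∫ ω, ((∑ q ∈ I, Y q ω) - I.card * c)^2 ∂μ ≤ ∑ q ∈ I, ∑ r ∈ I, B q r := by
  set D : ι → Ω → ℝ := fun q ω => Y q ω - c with hD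
  have hDmeas : ∀ q, Measurable (D q) := fun q => (hmeas q).sub measurable_const
  have hDbdd : ∀ q ω, |D q ω| ≤ C + |c| := fun q ω => by
    calc |Y q ω - c| ≤ |Y q ω| + |c| := abs_sub _ _
      _ ≤ C + |c| := by have := hbdd q ω; linarith
  have hDint : ∀ q r, Integrable (fun ω => D q ω * D r ω) μ := fun q r => by
    refine integrable_bdd μ _ ((hDmeas q).mul (hDmeas r)) ((C + |c|)^2) fun ω => ?_
    rw [abs_mul, sq]
    have h1 := hDbdd q ω; have h2 := hDbdd r ω
    have := abs_nonneg (D q ω); have := abs_nonneg (D r ω)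
    nlinarith
  have hYint : ∀ q, Integrable (Y q) μ := fun q => integrable_bdd μ _ (hmeas q) C (hbdd q)
  have hYYint : ∀ q r, Integrable (fun ω => Y q ω * Y r ω) μ := fun q r => by
    refine integrable_bdd μ _ ((hmeas q).mul (hmeas r)) (C^2) fun ω => ?_
    rw [abs_mul, sq]
    have h1 := hbdd q ω; have h2 := hbdd r ω
    have := abs_nonneg (Y q ω); have := abs_nonneg (Y r ω)
    nlinarith
  have hpt : ∀ ω, ((∑ q ∈ I, Y q ω) - I.card * c)^2 = ∑ q ∈ I, ∑ r ∈ I, D q ω * D r ω := by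
    intro ω
    have h1 : (∑ q ∈ I, Y q ω) - I.card * c = ∑ q ∈ I, D q ω := by
      simp [hD, Finset.sum_sub_distrib, mul_comm]
    rw [h1, sq, Finset.sum_mul_sum]
  have hint : ∫ ω, ((∑ q ∈ I, Y q ω) - I.card * c)^2 ∂μ
      = ∑ q ∈ I, ∑ r ∈ I, ∫ ω, D q ω * D r ω ∂μ := by
    rw [integral_congr_ae (Filter.Eventually.of_forall hpt)]
    rw [integral_finset_sum _ fun q _ => integrable_finset_sum _ fun r _ => hDint q r]
    exact Finset.sum_congr rfl fun q _ =>
      integral_finset_sum _ fun r _ => hDint q r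
  rw [hint]
  refine Finset.sum_le_sum fun q hq => Finset.sum_le_sum fun r hr => ?_
  have hDD : ∫ ω, D q ω * D r ω ∂μ = (∫ ω, Y q ω * Y r ω ∂μ) - c^2 := by
    have hexp : ∀ ω, D q ω * D r ω = Y q ω * Y r ω - c * Y q ω - c * Y r ω + c * c := by
      intro ω; simp [hD]; ring
    rw [integral_congr_ae (Filter.Eventually.of_forall hexp)]
    have i1 : Integrable (fun a => Y q a * Y r a) μ := hYYint q r
    have i2 : Integrable (fun a => c * Y q a) μ := (hYint q).const_mul c
    have i3 : Integrable (fun a => c * Y r a) μ := (hYint r).const_mul c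
    have i4 : Integrable (fun a => Y q a * Y r a - c * Y q a) μ := i1.sub i2
    have i5 : Integrable (fun a => Y q a * Y r a - c * Y q a - c * Y r a) μ := i4.sub i3
    rw [integral_add i5 (integrable_const (c*c)), integral_sub i4 i3, integral_sub i1 i2,
      MeasureTheory.integral_const_mul, MeasureTheory.integral_const_mul, hmean q hq, hmean r hr]
    simp [measure_univ]
    ring
  calc ∫ ω, D q ω * D r ω ∂μ ≤ |(∫ ω, Y q ω * Y r ω ∂μ) - c^2| := by
        rw [hDD]; exact le_abs_self _
    _ ≤ B q r := hB q hq r hr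

lemma count_bound (N M : ℕ) (b1 b2 : ℝ) (hb1 : 0 ≤ b1) (hb2 : 0 ≤ b2) :
    ∑ q ∈ Finset.range N ×ˢ Finset.range M, ∑ r ∈ Finset.range N ×ˢ Finset.range M,
      (if q = r then b1 else if q.1 = r.1 ∨ q.2 = r.2 then b2 else 0)
    ≤ (N*M : ℝ) * b1 + (N*M : ℝ)*(M+N)*b2 := by
  set I := Finset.range N ×ˢ Finset.range M with hI
  have hcard : (I.card : ℝ) = (N*M : ℝ) := by simp [hI]
  have hpt : ∀ q ∈ I, ∀ r ∈ I,
      (if q = r then b1 else if q.1 = r.1 ∨ q.2 = r.2 then b2 else 0)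
      ≤ (if q = r then b1 else 0) + ((if q.1 = r.1 then b2 else 0) + (if q.2 = r.2 then b2 else 0)) := by
    intro q _ r _
    by_cases h : q = r
    · simp [h, hb2]
    · simp only [if_neg h]
      by_cases h1 : q.1 = r.1
      · by_cases h2 : q.2 = r.2
        · exact absurd (Prod.ext h1 h2) h
        · simp [h1, h2, hb2]
      · by_cases h2 : q.2 = r.2
        · simp [h1, h2, hb2]
        · simp [h1, h2]
  calc ∑ q ∈ I, ∑ r ∈ I, (if q = r then b1 else if q.1 = r.1 ∨ q.2 = r.2 then b2 else 0)
      ≤ ∑ q ∈ I, ∑ r ∈ I,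
        ((if q = r then b1 else 0) + ((if q.1 = r.1 then b2 else 0) + (if q.2 = r.2 then b2 else 0))) :=
        Finset.sum_le_sum fun q hq => Finset.sum_le_sum fun r hr => hpt q hq r hr
    _ = (∑ q ∈ I, ∑ r ∈ I, if q = r then b1 else 0)
        + ((∑ q ∈ I, ∑ r ∈ I, if q.1 = r.1 then b2 else 0)
          + (∑ q ∈ I, ∑ r ∈ I, if q.2 = r.2 then b2 else 0)) := by
        simp [Finset.sum_add_distrib]
    _ ≤ (N*M : ℝ) * b1 + ((N*M : ℝ) * M * b2 + (N*M : ℝ) * N * b2) := by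
        gcongr ?_ + (?_ + ?_)
        · have hd : ∀ q ∈ I, (∑ r ∈ I, if q = r then b1 else 0) = b1 := by
            intro q hq
            rw [Finset.sum_ite_eq I q (fun _ => b1), if_pos hq]
          have : ∑ q ∈ I, ∑ r ∈ I, (if q = r then b1 else 0) = (N*M : ℝ) * b1 := by
            rw [Finset.sum_congr rfl hd, Finset.sum_const, nsmul_eq_mul, hcard]
          exact le_of_eq this
        · have hinner : ∀ q ∈ I, (∑ r ∈ I, if q.1 = r.1 then b2 else 0) ≤ (M:ℝ) * b2 := by
            intro q hq
            rw [hI, Finset.sum_product]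
            have : ∀ x ∈ Finset.range N, (∑ _y ∈ Finset.range M, if q.1 = x then b2 else 0)
                = if q.1 = x then (M:ℝ)*b2 else 0 := by
              intro x _
              by_cases h : q.1 = x <;> simp [h, mul_comm]
            rw [Finset.sum_congr rfl this, Finset.sum_ite_eq (Finset.range N) q.1 (fun _ => (M:ℝ)*b2)]
            by_cases h : q.1 ∈ Finset.range N
            · rw [if_pos h]
            · rw [if_neg h]; positivity
          calc ∑ q ∈ I, ∑ r ∈ I, (if q.1 = r.1 then b2 else 0) ≤ ∑ q ∈ I, (M:ℝ)*b2 :=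
                Finset.sum_le_sum hinner
            _ = (N*M : ℝ) * M * b2 := by rw [Finset.sum_const, nsmul_eq_mul, hcard]; ring
        · have hinner : ∀ q ∈ I, (∑ r ∈ I, if q.2 = r.2 then b2 else 0) ≤ (N:ℝ) * b2 := by
            intro q hq
            rw [hI, Finset.sum_product]
            have : ∀ x ∈ Finset.range N, (∑ y ∈ Finset.range M, if q.2 = y then b2 else 0)
                ≤ b2 := by
              intro x _
              rw [Finset.sum_ite_eq (Finset.range M) q.2 (fun _ => b2)]
              by_cases h : q.2 ∈ Finset.range M
              · rw [if_pos h]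
              · rw [if_neg h]; positivity
            calc ∑ x ∈ Finset.range N, ∑ y ∈ Finset.range M, (if q.2 = y then b2 else 0)
                ≤ ∑ _x ∈ Finset.range N, b2 := Finset.sum_le_sum this
              _ = (N:ℝ) * b2 := by rw [Finset.sum_const, nsmul_eq_mul]; simp
          calc ∑ q ∈ I, ∑ r ∈ I, (if q.2 = r.2 then b2 else 0) ≤ ∑ q ∈ I, (N:ℝ)*b2 :=
                Finset.sum_le_sum hinner
            _ = (N*M : ℝ) * N * b2 := by rw [Finset.sum_const, nsmul_eq_mul, hcard]; ring
    _ = (N*M : ℝ) * b1 + (N*M : ℝ)*(M+N)*b2 := by ring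

lemma abs_integral_le_bdd {Ω : Type*} [MeasurableSpace Ω] (μ : Measure Ω) [IsProbabilityMeasure μ]
    (g : Ω → ℝ) (hg : Measurable g) (C : ℝ) (h : ∀ ω, |g ω| ≤ C) :
    |∫ ω, g ω ∂μ| ≤ C := by
  have hint : Integrable g μ := integrable_bdd μ g hg C h
  calc |∫ ω, g ω ∂μ| ≤ ∫ ω, |g ω| ∂μ := by
        simpa [Real.norm_eq_abs] using norm_integral_le_integral_norm (μ := μ) g
    _ ≤ ∫ _ω, C ∂μ := integral_mono hint.abs (integrable_const C) fun ω => h ω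
    _ = C := by simp



lemma alg_div_sq (x m b c : ℝ) (hb : b ≠ 0) (h : c = b * m) :
    (x / b - m)^2 = (b⁻¹)^2 * (x - c)^2 := by
  subst h; field_simp

lemma alg2 (cN cM cp Cb : ℝ) (hN : cN ≠ 0) (hM : cM ≠ 0) (hp : cp ≠ 0) :
    ((cN*cM*cp)⁻¹)^2 * ((cN*cM) * (2*cp*Cb^2) + (cN*cM)*(cM+cN)*(2*cp^2*Cb^2))
      = 2*Cb^2*(cN*cM*cp)⁻¹ + 2*Cb^2*(cM⁻¹ + cN⁻¹) := by
  field_simp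
  ring

lemma alg3 (cN cM cp : ℝ) (hN : cN ≠ 0) (hM : cM ≠ 0) (hp : cp ≠ 0) :
    ((cN*cM*cp)⁻¹)^2 * ((cN*cM) * cp + (cN*cM)*(cM+cN)*0) = (cN*cM*cp)⁻¹ := by
  field_simp
  ring

lemma alg4 (s l aa m : ℝ) (ha : aa ≠ 0) :
    s - m * l = aa * (s/aa - m) - (m*aa) * (l/aa - 1) := by
  field_simp
  ring

lemma alg5 (l s m : ℝ) (hl : l ≠ 0) : l⁻¹ * s - m = (s - m*l)/l := by
  field_simp


lemma ratio_bound (eps del m aa s l : ℝ) (heps : 0 < eps) (ha : 0 < aa)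
    (hd0 : 0 < del) (hd2 : del ≤ 1/2) (hdm : del * (4*(|m|+1)) ≤ eps)
    (h1 : |s/aa - m| < eps/4) (h2 : |l/aa - 1| < del) :
    |l⁻¹ * s - m| < eps := by
  obtain ⟨h1l, h1r⟩ := abs_lt.1 h1
  obtain ⟨h2l, h2r⟩ := abs_lt.1 h2
  have hLgt : aa / 2 < l := by
    have hdiv : 1 - del < l / aa := by linarith
    have h1' : (1 - del) * aa < l := (lt_div_iff₀ ha).1 hdiv
    have h2' : 0 ≤ (1/2 - del) * aa := mul_nonneg (by linarith) ha.le
    nlinarith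
  have hL0 : 0 < l := by linarith
  have hre : l⁻¹ * s - m = (s - m * l) / l := alg5 _ _ _ (ne_of_gt hL0)
  have hkey : |s - m * l| < eps * l := by
    have hSd : s - m * l = aa * (s/aa - m) - (m*aa) * (l/aa - 1) :=
      alg4 _ _ _ _ (ne_of_gt ha)
    have habs : |s - m * l| ≤ aa * |s/aa - m| + |m| * aa * |l/aa - 1| := by
      rw [hSd]
      calc |aa * (s/aa - m) - (m*aa) * (l/aa - 1)|
          ≤ |aa * (s/aa - m)| + |(m*aa) * (l/aa - 1)| := abs_sub _ _
        _ = aa * |s/aa - m| + |m| * aa * |l/aa - 1| := by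
            rw [abs_mul, abs_mul, abs_mul, abs_of_pos ha]
    have hstep : aa * |s/aa - m| + |m| * aa * |l/aa - 1|
        ≤ aa * (eps/4) + |m| * aa * del := by
      have hmn : 0 ≤ |m| * aa := mul_nonneg (abs_nonneg m) ha.le
      exact add_le_add (mul_le_mul_of_nonneg_left h1.le ha.le)
        (mul_le_mul_of_nonneg_left h2.le hmn)
    have hm0d : |m| * del ≤ eps/4 := by nlinarith [abs_nonneg m]
    calc |s - m * l| ≤ aa * (eps/4) + |m| * aa * del := le_trans habs hstep
      _ ≤ aa * (eps/4) + aa * (eps/4) := by nlinarith [abs_nonneg m]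
      _ = eps * (aa / 2) := by ring
      _ < eps * l := mul_lt_mul_of_pos_left hLgt heps
  rw [hre, abs_div, abs_of_pos hL0, div_lt_iff₀ hL0]
  exact hkey

/-- Weak law of large numbers for Bernoulli-subsampled multiway clustered data:
for a separately exchangeable, dissociated array `W`, a bounded measurable `f` with
mean `m₀`, and i.i.d. Bernoulli(`p n`) selectors `Z n` independent of the data with
`N n · M n · p n → ∞`, the subsample mean `hatL⁻¹ ∑ Z f(W)` converges to `m₀`
in probability as `min{N n, M n} → ∞`. -/
theorem stmt12 {Ω E : Type*} [MeasurableSpace Ω] [MeasurableSpace E]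
    (μ : Measure Ω) [IsProbabilityMeasure μ]
    (W : ℕ → ℕ → Ω → E) (hWmeas : ∀ i j, Measurable (W i j))
    (hexch : SepExch μ W) (hdiss : Dissociated μ W)
    (f : E → ℝ) (hf : Measurable f) (Cb : ℝ) (hCb : ∀ x, |f x| ≤ Cb)
    (m₀ : ℝ) (hm₀ : ∫ ω, f (W 0 0 ω) ∂μ = m₀)
    (N M : ℕ → ℕ) (p : ℕ → ℝ) (hp : ∀ n, p n ∈ Set.Ioc (0 : ℝ) 1)
    (Z : ℕ → ℕ → ℕ → Ω → ℝ) (hZmeas : ∀ n i j, Measurable (Z n i j))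
    (hZval : ∀ n i j ω, Z n i j ω = 0 ∨ Z n i j ω = 1)
    (hZp : ∀ n i j, μ {ω | Z n i j ω = 1} = ENNReal.ofReal (p n))
    (hZiid : ∀ n, iIndepFun
      (fun ij : ℕ × ℕ => Z n ij.1 ij.2) μ)
    (hZW : IndepFun (fun ω (nij : ℕ × ℕ × ℕ) => Z nij.1 nij.2.1 nij.2.2 ω)
                    (fun ω (ij : ℕ × ℕ) => W ij.1 ij.2 ω) μ)
    (hmin : Tendsto (fun n => min (N n) (M n)) atTop atTop)
    (hLtop : Tendsto (fun n => (N n : ℝ) * M n * p n) atTop atTop) :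
    TendstoInMeasure μ
      (fun n ω =>
        (∑ i ∈ Finset.range (N n), ∑ j ∈ Finset.range (M n), Z n i j ω)⁻¹ *
          ∑ i ∈ Finset.range (N n), ∑ j ∈ Finset.range (M n), Z n i j ω * f (W i j ω))
      atTop (fun _ => m₀) := by
  -- basic positivity facts
  have hΩne : Nonempty Ω := by
    by_contra h
    rw [not_nonempty_iff] at h
    have : μ Set.univ = 0 := by simp [Set.univ_eq_empty_iff.2 h]
    rw [measure_univ] at this
    exact one_ne_zero this
  obtain ⟨ω₀⟩ := hΩne
  have hCb0 : 0 ≤ Cb := le_trans (abs_nonneg _) (hCb (W 0 0 ω₀))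
  have hm₀Cb : |m₀| ≤ Cb := by
    rw [← hm₀]
    exact abs_integral_le_bdd μ _ (hf.comp (hWmeas 0 0)) Cb fun ω => hCb _
  -- notation
  set a : ℕ → ℝ := fun n => (N n : ℝ) * (M n) * p n with ha
  set I : ℕ → Finset (ℕ × ℕ) := fun n => Finset.range (N n) ×ˢ Finset.range (M n) with hI
  set L : ℕ → Ω → ℝ := fun n ω => ∑ q ∈ I n, Z n q.1 q.2 ω with hL
  set S : ℕ → Ω → ℝ := fun n ω => ∑ q ∈ I n, Z n q.1 q.2 ω * f (W q.1 q.2 ω) with hS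
  -- measurability / integrability of basic blocks
  have hLmeas : ∀ n, Measurable (L n) := fun n =>
    Finset.measurable_sum _ fun q _ => hZmeas n q.1 q.2
  have hSmeas : ∀ n, Measurable (S n) := fun n =>
    Finset.measurable_sum _ fun q _ => (hZmeas n q.1 q.2).mul (hf.comp (hWmeas q.1 q.2))
  have hZbd : ∀ n i j ω, |Z n i j ω| ≤ 1 := by
    intro n i j ω
    rcases hZval n i j ω with h | h <;> rw [h] <;> norm_num
  have hZ01 : ∀ n i j ω, Z n i j ω * Z n i j ω = Z n i j ω := by
    intro n i j ω
    rcases hZval n i j ω with h | h <;> rw [h] <;> ring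
  have hZint : ∀ n i j, Integrable (Z n i j) μ := fun n i j =>
    integrable_bdd μ _ (hZmeas n i j) 1 (hZbd n i j)
  -- mean of Z
  have hEZ : ∀ n i j, ∫ ω, Z n i j ω ∂μ = p n := by
    intro n i j
    have hset : MeasurableSet {ω | Z n i j ω = 1} := hZmeas n i j (measurableSet_singleton 1)
    have hind : ∀ ω, Z n i j ω = Set.indicator {ω | Z n i j ω = 1} (fun _ => (1:ℝ)) ω := by
      intro ω
      rcases hZval n i j ω with h | h
      · rw [h, Set.indicator_of_notMem]
        simp [Set.mem_setOf_eq, h]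
      · rw [h, Set.indicator_of_mem]
        exact h
    rw [integral_congr_ae (Filter.Eventually.of_forall hind), integral_indicator_const _ hset,
      measureReal_def, hZp n i j, smul_eq_mul, mul_one, ENNReal.toReal_ofReal (hp n).1.le]
  -- product of two distinct Z's
  have hEZZ : ∀ n (q r : ℕ × ℕ), q ≠ r → ∫ ω, Z n q.1 q.2 ω * Z n r.1 r.2 ω ∂μ = (p n)^2 := by
    intro n q r hqr
    have hind : IndepFun (fun ω => Z n q.1 q.2 ω) (fun ω => Z n r.1 r.2 ω) μ :=
      (hZiid n).indepFun hqr
    have := hind.integral_mul_eq_mul_integral (hZint n q.1 q.2).aestronglyMeasurable (hZint n r.1 r.2).aestronglyMeasurable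
    rw [show ((fun ω => Z n q.1 q.2 ω) * fun ω => Z n r.1 r.2 ω)
      = fun ω => Z n q.1 q.2 ω * Z n r.1 r.2 ω from rfl] at this
    rw [this, hEZ, hEZ, sq]
  -- independence of Z blocks from W blocks
  have hZfW : ∀ n (q : ℕ × ℕ),
      IndepFun (fun ω => Z n q.1 q.2 ω) (fun ω => f (W q.1 q.2 ω)) μ := by
    intro n q
    exact hZW.comp (φ := fun g : ℕ × ℕ × ℕ → ℝ => g (n, q.1, q.2))
      (ψ := fun h : ℕ × ℕ → E => f (h (q.1, q.2)))
      (measurable_pi_apply _) (hf.comp (measurable_pi_apply _))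
  have hZZfWfW : ∀ n (q r : ℕ × ℕ),
      IndepFun (fun ω => Z n q.1 q.2 ω * Z n r.1 r.2 ω)
        (fun ω => f (W q.1 q.2 ω) * f (W r.1 r.2 ω)) μ := by
    intro n q r
    exact hZW.comp (φ := fun g : ℕ × ℕ × ℕ → ℝ => g (n, q.1, q.2) * g (n, r.1, r.2))
      (ψ := fun h : ℕ × ℕ → E => f (h (q.1, q.2)) * f (h (r.1, r.2)))
      ((measurable_pi_apply _).mul (measurable_pi_apply _))
      ((hf.comp (measurable_pi_apply _)).mul (hf.comp (measurable_pi_apply _)))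
  -- means of f(W)
  have hfWint : ∀ i j, Integrable (fun ω => f (W i j ω)) μ := fun i j =>
    integrable_bdd μ _ (hf.comp (hWmeas i j)) Cb fun ω => hCb _
  have hEfW : ∀ i j, ∫ ω, f (W i j ω) ∂μ = m₀ := by
    intro i j
    rw [single_mean μ W hWmeas f hf hexch i j, hm₀]
  -- mean of X = Z f(W)
  have hEX : ∀ n (q : ℕ × ℕ), ∫ ω, Z n q.1 q.2 ω * f (W q.1 q.2 ω) ∂μ = p n * m₀ := by
    intro n q
    have := (hZfW n q).integral_mul_eq_mul_integral (hZint n q.1 q.2).aestronglyMeasurable (hfWint q.1 q.2).aestronglyMeasurable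
    rw [show ((fun ω => Z n q.1 q.2 ω) * fun ω => f (W q.1 q.2 ω))
      = fun ω => Z n q.1 q.2 ω * f (W q.1 q.2 ω) from rfl] at this
    rw [this, hEZ, hEfW]
  -- variance bound for S
  have hXbd : ∀ n (q : ℕ × ℕ) ω, |Z n q.1 q.2 ω * f (W q.1 q.2 ω)| ≤ Cb := by
    intro n q ω
    rw [abs_mul]
    have h1 := hZbd n q.1 q.2 ω
    have h2 := hCb (W q.1 q.2 ω)
    have := abs_nonneg (Z n q.1 q.2 ω)
    have := abs_nonneg (f (W q.1 q.2 ω))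
    nlinarith
  have hffbd : ∀ (q r : ℕ × ℕ) ω, |f (W q.1 q.2 ω) * f (W r.1 r.2 ω)| ≤ Cb^2 := by
    intro q r ω
    rw [abs_mul, sq]
    have h1 := hCb (W q.1 q.2 ω)
    have h2 := hCb (W r.1 r.2 ω)
    have := abs_nonneg (f (W q.1 q.2 ω))
    have := abs_nonneg (f (W r.1 r.2 ω))
    nlinarith
  have hffint : ∀ (q r : ℕ × ℕ), Integrable (fun ω => f (W q.1 q.2 ω) * f (W r.1 r.2 ω)) μ :=
    fun q r => integrable_bdd μ _ ((hf.comp (hWmeas q.1 q.2)).mul (hf.comp (hWmeas r.1 r.2)))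
      (Cb^2) (hffbd q r)
  have hZZint : ∀ n (q r : ℕ × ℕ), Integrable (fun ω => Z n q.1 q.2 ω * Z n r.1 r.2 ω) μ := by
    intro n q r
    refine integrable_bdd μ _ ((hZmeas n q.1 q.2).mul (hZmeas n r.1 r.2)) 1 fun ω => ?_
    rw [abs_mul]
    have h1 := hZbd n q.1 q.2 ω
    have h2 := hZbd n r.1 r.2 ω
    have := abs_nonneg (Z n q.1 q.2 ω)
    have := abs_nonneg (Z n r.1 r.2 ω)
    nlinarith
  have hm₀sq : m₀^2 ≤ Cb^2 := by nlinarith [sq_abs m₀, abs_nonneg m₀]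
  have hVarS : ∀ n, ∫ ω, (S n ω - (↑((I n).card)) * (p n * m₀))^2 ∂μ
      ≤ (N n * M n : ℝ) * (2 * p n * Cb^2) + (N n * M n : ℝ) * (M n + N n) * (2 * (p n)^2 * Cb^2) := by
    intro n
    have hp0 := (hp n).1
    have hp1 := (hp n).2
    have h1 := sum_sq_expansion μ (I n)
      (fun q ω => Z n q.1 q.2 ω * f (W q.1 q.2 ω)) (p n * m₀) Cb
      (fun q => (hZmeas n q.1 q.2).mul (hf.comp (hWmeas q.1 q.2)))
      (fun q ω => hXbd n q ω)
      (fun q _ => hEX n q)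
      (fun q r => if q = r then 2 * p n * Cb^2
        else if q.1 = r.1 ∨ q.2 = r.2 then 2 * (p n)^2 * Cb^2 else 0)
      (by
        intro q hq r hr
        beta_reduce
        by_cases h : q = r
        · subst h
          rw [if_pos rfl]
          -- diagonal case
          have hptle : ∀ ω, (Z n q.1 q.2 ω * f (W q.1 q.2 ω)) * (Z n q.1 q.2 ω * f (W q.1 q.2 ω))
              ≤ Cb^2 * Z n q.1 q.2 ω := by
            intro ω
            rcases hZval n q.1 q.2 ω with h0 | h0 <;> rw [h0]
            · ring_nf
              positivity
            · have := hCb (W q.1 q.2 ω)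
              have := abs_nonneg (f (W q.1 q.2 ω))
              nlinarith [sq_abs (f (W q.1 q.2 ω))]
          have hIprod : Integrable (fun ω => (Z n q.1 q.2 ω * f (W q.1 q.2 ω))
              * (Z n q.1 q.2 ω * f (W q.1 q.2 ω))) μ := by
            refine integrable_bdd μ _
              (((hZmeas n q.1 q.2).mul (hf.comp (hWmeas q.1 q.2))).mul
                ((hZmeas n q.1 q.2).mul (hf.comp (hWmeas q.1 q.2)))) (Cb^2) fun ω => ?_
            rw [abs_mul, sq]
            have := hXbd n q ω
            have := abs_nonneg (Z n q.1 q.2 ω * f (W q.1 q.2 ω))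
            nlinarith
          have hup : ∫ ω, (Z n q.1 q.2 ω * f (W q.1 q.2 ω))
              * (Z n q.1 q.2 ω * f (W q.1 q.2 ω)) ∂μ ≤ p n * Cb^2 := by
            calc ∫ ω, (Z n q.1 q.2 ω * f (W q.1 q.2 ω)) * (Z n q.1 q.2 ω * f (W q.1 q.2 ω)) ∂μ
                ≤ ∫ ω, Cb^2 * Z n q.1 q.2 ω ∂μ :=
                  integral_mono hIprod ((hZint n q.1 q.2).const_mul (Cb^2)) hptle
              _ = Cb^2 * p n := by rw [MeasureTheory.integral_const_mul, hEZ]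
              _ = p n * Cb^2 := by ring
          have hlo : 0 ≤ ∫ ω, (Z n q.1 q.2 ω * f (W q.1 q.2 ω))
              * (Z n q.1 q.2 ω * f (W q.1 q.2 ω)) ∂μ :=
            integral_nonneg fun ω => mul_self_nonneg _
          have hc1 : 0 ≤ (p n * m₀)^2 := sq_nonneg _
          have hpsq : (p n)^2 ≤ p n := by nlinarith
          have hc2 : (p n * m₀)^2 ≤ p n * Cb^2 := by
            nlinarith [mul_nonneg (sub_nonneg.2 hpsq) (sq_nonneg m₀),
              mul_nonneg hp0.le (sub_nonneg.2 hm₀sq)]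
          rw [abs_le]
          constructor <;> nlinarith
        · rw [if_neg h]
          -- off-diagonal: factor through independence
          have hsplit : ∀ ω, (Z n q.1 q.2 ω * f (W q.1 q.2 ω)) * (Z n r.1 r.2 ω * f (W r.1 r.2 ω))
              = (Z n q.1 q.2 ω * Z n r.1 r.2 ω) * (f (W q.1 q.2 ω) * f (W r.1 r.2 ω)) := by
            intro ω; ring
          have hfactor : ∫ ω, (Z n q.1 q.2 ω * f (W q.1 q.2 ω)) * (Z n r.1 r.2 ω * f (W r.1 r.2 ω)) ∂μ
              = (p n)^2 * ∫ ω, f (W q.1 q.2 ω) * f (W r.1 r.2 ω) ∂μ := by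
            rw [integral_congr_ae (Filter.Eventually.of_forall hsplit)]
            have := (hZZfWfW n q r).integral_mul_eq_mul_integral (hZZint n q r).aestronglyMeasurable (hffint q r).aestronglyMeasurable
            rw [show ((fun ω => Z n q.1 q.2 ω * Z n r.1 r.2 ω)
              * fun ω => f (W q.1 q.2 ω) * f (W r.1 r.2 ω))
              = fun ω => (Z n q.1 q.2 ω * Z n r.1 r.2 ω) * (f (W q.1 q.2 ω) * f (W r.1 r.2 ω))
              from rfl] at this
            rw [this, hEZZ n q r h]
          rw [hfactor]
          by_cases hal : q.1 = r.1 ∨ q.2 = r.2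
          · rw [if_pos hal]
            have hffabs : |∫ ω, f (W q.1 q.2 ω) * f (W r.1 r.2 ω) ∂μ| ≤ Cb^2 :=
              abs_integral_le_bdd μ _ ((hf.comp (hWmeas q.1 q.2)).mul (hf.comp (hWmeas r.1 r.2)))
                (Cb^2) (hffbd q r)
            have habs := abs_le.1 hffabs
            rw [abs_le]
            constructor <;> nlinarith
          · rw [if_neg hal]
            push_neg at hal
            have hcm := cross_mean μ W hWmeas f hf hexch hdiss hal.1 hal.2 Cb hCb
            rw [hm₀] at hcm
            rw [hcm]
            have hz : (p n)^2 * (m₀ * m₀) - (p n * m₀)^2 = 0 := by ring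
            rw [hz, abs_zero])
    have h2 := count_bound (N n) (M n) (2 * p n * Cb^2) (2 * (p n)^2 * Cb^2)
      (by nlinarith) (by nlinarith)
    exact le_trans h1 h2
  -- variance bound for L
  have hVarL : ∀ n, ∫ ω, (L n ω - (↑((I n).card)) * (p n))^2 ∂μ
      ≤ (N n * M n : ℝ) * (p n) + (N n * M n : ℝ) * (M n + N n) * 0 := by
    intro n
    have hp0 := (hp n).1
    have hp1 := (hp n).2
    have h1 := sum_sq_expansion μ (I n) (fun q ω => Z n q.1 q.2 ω) (p n) 1
      (fun q => hZmeas n q.1 q.2) (fun q ω => hZbd n q.1 q.2 ω)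
      (fun q _ => hEZ n q.1 q.2)
      (fun q r => if q = r then p n else if q.1 = r.1 ∨ q.2 = r.2 then 0 else 0)
      (by
        intro q hq r hr
        beta_reduce
        by_cases h : q = r
        · subst h
          rw [if_pos rfl]
          have : ∫ ω, Z n q.1 q.2 ω * Z n q.1 q.2 ω ∂μ = p n := by
            rw [integral_congr_ae (Filter.Eventually.of_forall (hZ01 n q.1 q.2)), hEZ]
          rw [this]
          rw [abs_of_nonneg (by nlinarith)]
          nlinarith
        · rw [if_neg h, hEZZ n q r h]
          simp)
    have h2 := count_bound (N n) (M n) (p n) 0 hp0.le le_rfl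
    exact le_trans h1 h2
  have hcard : ∀ n, ((I n).card : ℝ) = (N n : ℝ) * M n := by
    intro n; simp [hI]
  -- the actual limit statement
  rw [tendstoInMeasure_iff_dist]
  intro ε hε
  set δ : ℝ := min (1/2) (ε / (4 * (|m₀| + 1))) with hδ
  have hδpos : 0 < δ := by
    apply lt_min
    · norm_num
    · positivity
  set G : ℕ → ℝ := fun n =>
    (2 * Cb^2 * (a n)⁻¹ + 2 * Cb^2 * (((M n : ℝ))⁻¹ + ((N n : ℝ))⁻¹)) / (ε/4)^2
      + (a n)⁻¹ / δ^2 with hG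
  have hGto : Tendsto G atTop (𝓝 0) := by
    have hainv : Tendsto (fun n => (a n)⁻¹) atTop (𝓝 0) := hLtop.inv_tendsto_atTop
    have hNat : Tendsto (fun n => (N n : ℝ)) atTop atTop :=
      tendsto_natCast_atTop_atTop.comp
        (tendsto_atTop_mono (fun n => min_le_left (N n) (M n)) hmin)
    have hMat : Tendsto (fun n => (M n : ℝ)) atTop atTop :=
      tendsto_natCast_atTop_atTop.comp
        (tendsto_atTop_mono (fun n => min_le_right (N n) (M n)) hmin)
    have hNinv : Tendsto (fun n => ((N n : ℝ))⁻¹) atTop (𝓝 0) := hNat.inv_tendsto_atTop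
    have hMinv : Tendsto (fun n => ((M n : ℝ))⁻¹) atTop (𝓝 0) := hMat.inv_tendsto_atTop
    have := (((hainv.const_mul (2*Cb^2)).add
        ((hMinv.add hNinv).const_mul (2*Cb^2))).div_const ((ε/4)^2)).add
        (hainv.div_const (δ^2))
    simpa using this
  have hbound : ∀ᶠ n in atTop, μ {ω | ε ≤ dist ((L n ω)⁻¹ * S n ω) m₀} ≤ ENNReal.ofReal (G n) := by
    filter_upwards [hLtop.eventually_ge_atTop 1] with n han
    have hp0 := (hp n).1
    have hp1 := (hp n).2
    have ha0 : (0:ℝ) < a n := lt_of_lt_of_le one_pos han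
    have hNne : N n ≠ 0 := by
      intro h
      have : a n = 0 := by simp [ha, h]
      rw [this] at han
      norm_num at han
    have hMne : M n ≠ 0 := by
      intro h
      have : a n = 0 := by simp [ha, h]
      rw [this] at han
      norm_num at han
    have hN0 : (0:ℝ) < (N n : ℝ) := by exact_mod_cast Nat.pos_of_ne_zero hNne
    have hM0 : (0:ℝ) < (M n : ℝ) := by exact_mod_cast Nat.pos_of_ne_zero hMne
    have hainv0 : (0:ℝ) ≤ (a n)⁻¹ := inv_nonneg.2 ha0.le
    have hNinv0 : (0:ℝ) ≤ ((N n : ℝ))⁻¹ := inv_nonneg.2 hN0.le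
    have hMinv0 : (0:ℝ) ≤ ((M n : ℝ))⁻¹ := inv_nonneg.2 hM0.le
    have hδm4 : δ * (4 * (|m₀| + 1)) ≤ ε := by
      have hh := min_le_right (1/2) (ε / (4 * (|m₀| + 1)))
      have h4 : (0:ℝ) < 4 * (|m₀| + 1) := by positivity
      calc δ * (4 * (|m₀| + 1)) ≤ (ε / (4 * (|m₀| + 1))) * (4 * (|m₀| + 1)) :=
            mul_le_mul_of_nonneg_right hh h4.le
        _ = ε := by field_simp
    -- inclusion of events
    have hsub : {ω | ε ≤ dist ((L n ω)⁻¹ * S n ω) m₀}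
        ⊆ {ω | ε/4 ≤ |S n ω / a n - m₀|} ∪ {ω | δ ≤ |L n ω / a n - 1|} := by
      intro ω hω
      simp only [Set.mem_setOf_eq, Real.dist_eq] at hω
      by_contra hc
      simp only [Set.mem_union, Set.mem_setOf_eq, not_or, not_le] at hc
      obtain ⟨h1, h2⟩ := hc
      exact absurd (ratio_bound ε δ m₀ (a n) (S n ω) (L n ω) hε ha0 hδpos
        (min_le_left _ _) hδm4 h1 h2) (not_lt.2 hω)
    -- Chebyshev for S/a
    have hSbd : ∀ ω, |S n ω| ≤ ((N n : ℝ) * M n) * Cb := by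
      intro ω
      calc |S n ω| ≤ ∑ q ∈ I n, |Z n q.1 q.2 ω * f (W q.1 q.2 ω)| := by
            exact Finset.abs_sum_le_sum_abs _ _
        _ ≤ ∑ q ∈ I n, Cb := Finset.sum_le_sum fun q _ => hXbd n q ω
        _ = ((N n : ℝ) * M n) * Cb := by
            rw [Finset.sum_const, nsmul_eq_mul, hcard n]
    have hLbd : ∀ ω, |L n ω| ≤ ((N n : ℝ) * M n) := by
      intro ω
      calc |L n ω| ≤ ∑ q ∈ I n, |Z n q.1 q.2 ω| := Finset.abs_sum_le_sum_abs _ _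
        _ ≤ ∑ q ∈ I n, 1 := Finset.sum_le_sum fun q _ => hZbd n q.1 q.2 ω
        _ = ((N n : ℝ) * M n) := by rw [Finset.sum_const, nsmul_eq_mul, hcard n, mul_one]
    have hintA : Integrable (fun ω => (S n ω / a n - m₀)^2) μ := by
      refine integrable_bdd μ _ (((hSmeas n).div_const _).sub measurable_const |>.pow_const 2)
        ((((N n : ℝ) * M n) * Cb * (a n)⁻¹ + |m₀|)^2) fun ω => ?_
      rw [abs_of_nonneg (sq_nonneg _)]
      have hb1 : |S n ω / a n - m₀| ≤ ((N n : ℝ) * M n) * Cb * (a n)⁻¹ + |m₀| := by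
        calc |S n ω / a n - m₀| ≤ |S n ω / a n| + |m₀| := abs_sub _ _
          _ ≤ ((N n : ℝ) * M n) * Cb * (a n)⁻¹ + |m₀| := by
              rw [abs_div, abs_of_pos ha0, div_eq_mul_inv]
              exact add_le_add (mul_le_mul_of_nonneg_right (hSbd ω) hainv0) le_rfl
      obtain ⟨hlo, hhi⟩ := abs_le.1 hb1
      exact sq_le_sq' hlo hhi
    have hintB : Integrable (fun ω => (L n ω / a n - 1)^2) μ := by
      refine integrable_bdd μ _ (((hLmeas n).div_const _).sub measurable_const |>.pow_const 2)
        ((((N n : ℝ) * M n) * (a n)⁻¹ + 1)^2) fun ω => ?_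
      rw [abs_of_nonneg (sq_nonneg _)]
      have hb1 : |L n ω / a n - 1| ≤ ((N n : ℝ) * M n) * (a n)⁻¹ + 1 := by
        calc |L n ω / a n - 1| ≤ |L n ω / a n| + |(1:ℝ)| := abs_sub _ _
          _ ≤ ((N n : ℝ) * M n) * (a n)⁻¹ + 1 := by
              rw [abs_div, abs_of_pos ha0, div_eq_mul_inv, abs_one]
              exact add_le_add (mul_le_mul_of_nonneg_right (hLbd ω) hainv0) le_rfl
      obtain ⟨hlo, hhi⟩ := abs_le.1 hb1
      exact sq_le_sq' hlo hhi
    have hVleA : ∫ ω, (S n ω / a n - m₀)^2 ∂μ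
        ≤ 2 * Cb^2 * (a n)⁻¹ + 2 * Cb^2 * (((M n : ℝ))⁻¹ + ((N n : ℝ))⁻¹) := by
      have harw : a n = (N n : ℝ) * M n * p n := by rw [ha]
      have hpt : ∀ ω, (S n ω / a n - m₀)^2
          = ((a n)⁻¹)^2 * (S n ω - (↑((I n).card)) * (p n * m₀))^2 := by
        intro ω
        rw [hcard n]
        exact alg_div_sq (S n ω) m₀ (a n) _ (ne_of_gt ha0) (by rw [harw]; ring)
      calc ∫ ω, (S n ω / a n - m₀)^2 ∂μ
          = ((a n)⁻¹)^2 * ∫ ω, (S n ω - (↑((I n).card)) * (p n * m₀))^2 ∂μ := by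
            rw [integral_congr_ae (Filter.Eventually.of_forall hpt),
              MeasureTheory.integral_const_mul]
        _ ≤ ((a n)⁻¹)^2 * ((N n * M n : ℝ) * (2 * p n * Cb^2)
            + (N n * M n : ℝ) * (M n + N n) * (2 * (p n)^2 * Cb^2)) :=
            mul_le_mul_of_nonneg_left (hVarS n) (sq_nonneg _)
        _ = 2 * Cb^2 * (a n)⁻¹ + 2 * Cb^2 * (((M n : ℝ))⁻¹ + ((N n : ℝ))⁻¹) := by
            rw [harw]
            exact alg2 _ _ _ _ hN0.ne' hM0.ne' hp0.ne'
    have hVleB : ∫ ω, (L n ω / a n - 1)^2 ∂μ ≤ (a n)⁻¹ := by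
      have harw : a n = (N n : ℝ) * M n * p n := by rw [ha]
      have hpt : ∀ ω, (L n ω / a n - 1)^2
          = ((a n)⁻¹)^2 * (L n ω - (↑((I n).card)) * (p n))^2 := by
        intro ω
        rw [hcard n]
        exact alg_div_sq (L n ω) 1 (a n) _ (ne_of_gt ha0) (by rw [harw]; ring)
      calc ∫ ω, (L n ω / a n - 1)^2 ∂μ
          = ((a n)⁻¹)^2 * ∫ ω, (L n ω - (↑((I n).card)) * (p n))^2 ∂μ := by
            rw [integral_congr_ae (Filter.Eventually.of_forall hpt),
              MeasureTheory.integral_const_mul]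
        _ ≤ ((a n)⁻¹)^2 * ((N n * M n : ℝ) * (p n) + (N n * M n : ℝ) * (M n + N n) * 0) :=
            mul_le_mul_of_nonneg_left (hVarL n) (sq_nonneg _)
        _ = (a n)⁻¹ := by
            rw [harw]
            exact alg3 _ _ _ hN0.ne' hM0.ne' hp0.ne'
    have chebA := cheb μ (fun ω => S n ω / a n) ((hSmeas n).div_const _) m₀
      (2 * Cb^2 * (a n)⁻¹ + 2 * Cb^2 * (((M n : ℝ))⁻¹ + ((N n : ℝ))⁻¹)) (ε/4)
      (by positivity) hintA hVleA
    have chebB := cheb μ (fun ω => L n ω / a n) ((hLmeas n).div_const _) 1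
      ((a n)⁻¹) δ hδpos hintB hVleB
    calc μ {ω | ε ≤ dist ((L n ω)⁻¹ * S n ω) m₀}
        ≤ μ ({ω | ε/4 ≤ |S n ω / a n - m₀|} ∪ {ω | δ ≤ |L n ω / a n - 1|}) :=
          measure_mono hsub
      _ ≤ μ {ω | ε/4 ≤ |S n ω / a n - m₀|} + μ {ω | δ ≤ |L n ω / a n - 1|} :=
          measure_union_le _ _
      _ ≤ ENNReal.ofReal ((2 * Cb^2 * (a n)⁻¹ + 2 * Cb^2 * (((M n : ℝ))⁻¹ + ((N n : ℝ))⁻¹))/(ε/4)^2)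
          + ENNReal.ofReal ((a n)⁻¹/δ^2) := add_le_add chebA chebB
      _ ≤ ENNReal.ofReal (G n) := by
          have hnn1 : (0:ℝ) ≤ (2 * Cb^2 * (a n)⁻¹
              + 2 * Cb^2 * (((M n : ℝ))⁻¹ + ((N n : ℝ))⁻¹))/(ε/4)^2 :=
            div_nonneg (add_nonneg
              (mul_nonneg (mul_nonneg (by norm_num) (sq_nonneg Cb)) hainv0)
              (mul_nonneg (mul_nonneg (by norm_num) (sq_nonneg Cb))
                (add_nonneg hMinv0 hNinv0))) (sq_nonneg _)
          have hnn2 : (0:ℝ) ≤ (a n)⁻¹/δ^2 := div_nonneg hainv0 (sq_nonneg _)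
          rw [← ENNReal.ofReal_add hnn1 hnn2]
  have hgoalev : (fun n => μ {ω | ε ≤ dist ((L n ω)⁻¹ * S n ω) m₀}) = fun n =>
      μ {x | ε ≤ dist ((∑ i ∈ Finset.range (N n), ∑ j ∈ Finset.range (M n), Z n i j x)⁻¹ *
        ∑ i ∈ Finset.range (N n), ∑ j ∈ Finset.range (M n), Z n i j x * f (W i j x)) m₀} := by
    funext n
    congr 1
    ext x
    simp only [hL, hS, hI, Finset.sum_product, Set.mem_setOf_eq]
  rw [← hgoalev]
  refine tendsto_of_tendsto_of_tendsto_of_le_of_le' tendsto_const_nhds ?_ ?_ hbound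
  · have := ENNReal.tendsto_ofReal (f := atTop) hGto
    simpa using this
  · exact Filter.Eventually.of_forall fun n => zero_le
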